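/- Suppose nonnegative sequences (s^k), (t^k) satisfy 0 ≤ t^k ≤ s^k, s^{k+1} ≤ β^k t^k + (1−β^k) s^k, and t^{k+1} ≤ (1 − n β^k) s^k, where 0 < n β^k ≤ 1 and 0 < β^k ≤ 1. Then s^{k+1} ≤ (1 − n β^k β^{k−1}) s^{k−1} for all k ≥ 1, and if ∑_{k=1}^∞ β^{2k} β^{2k−1} = ∞ then s^k → 0. -/
import Mathlib


/-- For coupled nonnegative sequences satisfying the contraction inequalities,
`s^(k+1) ≤ (1 - n β^k β^(k-1)) s^(k-1)` for `k ≥ 1`; and if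
`∑_{k≥1} β^(2k) β^(2k-1) = ∞`, then `s^k → 0`. -/
theorem stmt14 (n : ℕ) (hn : 1 ≤ n) (β s t : ℕ → ℝ)
    (hβ : ∀ k, 0 < β k ∧ (n : ℝ) * β k ≤ 1) (hβ1 : ∀ k, β k ≤ 1)
    (hst : ∀ k, 0 ≤ t k ∧ t k ≤ s k)
    (hs : ∀ k, s (k + 1) ≤ β k * t k + (1 - β k) * s k)
    (ht : ∀ k, t (k + 1) ≤ (1 - (n : ℝ) * β k) * s k) :
    (∀ k, 1 ≤ k → s (k + 1) ≤ (1 - (n : ℝ) * β k * β (k - 1)) * s (k - 1)) ∧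
      (¬ Summable (fun k : ℕ => β (2 * k + 2) * β (2 * k + 1)) →
        Filter.Tendsto s Filter.atTop (nhds 0)) := by
  have hs0 : ∀ k, 0 ≤ s k := fun k => (hst k).1.trans (hst k).2
  have hmono : ∀ k, s (k + 1) ≤ s k := by
    intro k
    have h1 := hs k
    have h2 := (hst k).2
    have h3 := (hβ k).1
    nlinarith [hβ1 k]
  have key : ∀ m, s (m + 2) ≤ (1 - (n : ℝ) * β (m + 1) * β m) * s m := by
    intro m
    have h1 := hs (m + 1)
    have h2 := ht m
    have h3 := (hβ (m + 1)).1
    have h4 := hβ1 (m + 1)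
    have h5 := hmono m
    have h6 := hs0 m
    nlinarith [(hst (m + 1)).1]
  have part1 : ∀ k, 1 ≤ k → s (k + 1) ≤ (1 - (n : ℝ) * β k * β (k - 1)) * s (k - 1) := by
    intro k hk
    obtain ⟨m, rfl⟩ := Nat.exists_eq_add_of_le hk
    have : 1 + m = m + 1 := Nat.add_comm 1 m
    rw [this]
    simpa using key m
  refine ⟨part1, fun hns => ?_⟩
  have hanti : Antitone s := antitone_nat_of_succ_le hmono
  have hbdd : BddBelow (Set.range s) := ⟨0, fun x ⟨k, hk⟩ => hk ▸ hs0 k⟩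
  have htend : Filter.Tendsto s Filter.atTop (nhds (⨅ i, s i)) :=
    tendsto_atTop_ciInf hanti hbdd
  set L : ℝ := ⨅ i, s i with hL
  have hL0 : 0 ≤ L := le_ciInf hs0
  have hLle : ∀ m, L ≤ s m := fun m => ciInf_le hbdd m
  rcases eq_or_lt_of_le hL0 with hLeq | hLpos
  · rwa [← hLeq] at htend
  · exfalso
    apply hns
    set a : ℕ → ℝ := fun k => β (2 * k + 2) * β (2 * k + 1) with ha
    have ha0 : ∀ k, 0 ≤ a k := fun k =>
      le_of_lt (mul_pos (hβ (2 * k + 2)).1 (hβ (2 * k + 1)).1)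
    have hn1 : (1 : ℝ) ≤ n := by exact_mod_cast hn
    have hsum : ∀ K, (n : ℝ) * L * (∑ k ∈ Finset.range K, a k) ≤ s 1 - s (2 * K + 1) := by
      intro K
      induction K with
      | zero => simp
      | succ K ih =>
        have h1 := key (2 * K + 1)
        have h2 := hLle (2 * K + 1)
        have h3 := ha0 K
        rw [Finset.sum_range_succ]
        have e1 : 2 * (K + 1) + 1 = 2 * K + 1 + 2 := by ring
        rw [e1]
        have h4 : s (2 * K + 1 + 2) ≤ (1 - (n : ℝ) * β (2 * K + 2) * β (2 * K + 1)) * s (2 * K + 1) := h1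
        have h6 : a K = β (2 * K + 2) * β (2 * K + 1) := rfl
        have hna : 0 ≤ (n : ℝ) * a K := mul_nonneg (Nat.cast_nonneg n) h3
        have h5 : (n : ℝ) * a K * L ≤ (n : ℝ) * a K * s (2 * K + 1) :=
          mul_le_mul_of_nonneg_left h2 hna
        have h4' : s (2 * K + 1 + 2) ≤ (1 - (n : ℝ) * a K) * s (2 * K + 1) := by
          rw [h6, ← mul_assoc]; exact h4
        nlinarith [h5, h4']
    apply summable_of_sum_range_le ha0 (c := s 1 / ((n : ℝ) * L))
    intro K
    have hnL : 0 < (n : ℝ) * L := mul_pos (by linarith) hLpos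
    rw [le_div_iff₀ hnL]
    have := hsum K
    have := hs0 (2 * K + 1)
    nlinarith
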